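/- Let (E,{·,·}) be a coisotropic vector bundle. The relation on the set of coisotropic sections of (E,{·,·}) defined by μ ∼_H ν if and only if there exists a Hamiltonian homotopy from μ to ν is an equivalence relation (it is reflexive, symmetric and transitive). -/

import Mathlib

open Set
open scoped Manifold Bundle

/-- A Poisson bracket on a smooth manifold `M` modelled on `I`: an ℝ-bilinear,
antisymmetric bracket on smooth real-valued functions satisfying the Jacobi identity
and the Leibniz rule. -/
structure PoissonBracket {EM : Type*} [NormedAddCommGroup EM] [NormedSpace ℝ EM]
    {HM : Type*} [TopologicalSpace HM] (I : ModelWithCorners ℝ EM HM)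
    (M : Type*) [TopologicalSpace M] [ChartedSpace HM M] where
  bracket : (M → ℝ) → (M → ℝ) → M → ℝ
  smooth_bracket : ∀ f g : M → ℝ, ContMDiff I 𝓘(ℝ, ℝ) (⊤ : ℕ∞) f → ContMDiff I 𝓘(ℝ, ℝ) (⊤ : ℕ∞) g →
    ContMDiff I 𝓘(ℝ, ℝ) (⊤ : ℕ∞) (bracket f g)
  add_left : ∀ f g h : M → ℝ, ContMDiff I 𝓘(ℝ, ℝ) (⊤ : ℕ∞) f → ContMDiff I 𝓘(ℝ, ℝ) (⊤ : ℕ∞) g →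
    ContMDiff I 𝓘(ℝ, ℝ) (⊤ : ℕ∞) h → bracket (f + g) h = bracket f h + bracket g h
  smul_left : ∀ (c : ℝ) (f g : M → ℝ), ContMDiff I 𝓘(ℝ, ℝ) (⊤ : ℕ∞) f → ContMDiff I 𝓘(ℝ, ℝ) (⊤ : ℕ∞) g →
    bracket (c • f) g = c • bracket f g
  antisymm : ∀ f g : M → ℝ, ContMDiff I 𝓘(ℝ, ℝ) (⊤ : ℕ∞) f → ContMDiff I 𝓘(ℝ, ℝ) (⊤ : ℕ∞) g →
    bracket f g = -bracket g f
  jacobi : ∀ f g h : M → ℝ, ContMDiff I 𝓘(ℝ, ℝ) (⊤ : ℕ∞) f → ContMDiff I 𝓘(ℝ, ℝ) (⊤ : ℕ∞) g →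
    ContMDiff I 𝓘(ℝ, ℝ) (⊤ : ℕ∞) h →
    bracket f (bracket g h) + bracket g (bracket h f) + bracket h (bracket f g) = 0
  leibniz : ∀ f g h : M → ℝ, ContMDiff I 𝓘(ℝ, ℝ) (⊤ : ℕ∞) f → ContMDiff I 𝓘(ℝ, ℝ) (⊤ : ℕ∞) g →
    ContMDiff I 𝓘(ℝ, ℝ) (⊤ : ℕ∞) h → bracket f (g * h) = bracket f g * h + g * bracket f h

/-- A smooth one-parameter family of Hamiltonian diffeomorphisms of the Poisson
manifold `(M, P)`: a smooth map `φ : M × [0,1] → M` (written `toFun t x`) such that each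
`φ_t`, `t ∈ [0,1]`, is a diffeomorphism (with inverse `invFun t`), `φ_0 = id`, generated
by a smooth function `F : M × [0,1] → ℝ` in the sense that
`d/dt|_{t=s} f (φ_t x) = {F_s, f} (φ_s x)` for every smooth `f : M → ℝ`. -/
structure HamiltonianFamily {EM : Type*} [NormedAddCommGroup EM] [NormedSpace ℝ EM]
    {HM : Type*} [TopologicalSpace HM] {I : ModelWithCorners ℝ EM HM}
    {M : Type*} [TopologicalSpace M] [ChartedSpace HM M]
    (P : PoissonBracket I M) where
  toFun : ℝ → M → M
  invFun : ℝ → M → M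
  smooth_toFun : ContMDiffOn (I.prod 𝓘(ℝ, ℝ)) I (⊤ : ℕ∞) (fun p : M × ℝ => toFun p.2 p.1)
    (univ ×ˢ Icc 0 1)
  smooth_each : ∀ t ∈ Icc (0:ℝ) 1, ContMDiff I I (⊤ : ℕ∞) (toFun t)
  smooth_inv : ∀ t ∈ Icc (0:ℝ) 1, ContMDiff I I (⊤ : ℕ∞) (invFun t)
  left_inv : ∀ t ∈ Icc (0:ℝ) 1, Function.LeftInverse (invFun t) (toFun t)
  right_inv : ∀ t ∈ Icc (0:ℝ) 1, Function.RightInverse (invFun t) (toFun t)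
  init : toFun 0 = id
  F : ℝ → M → ℝ
  smooth_F : ContMDiffOn (I.prod 𝓘(ℝ, ℝ)) 𝓘(ℝ, ℝ) (⊤ : ℕ∞) (fun p : M × ℝ => F p.2 p.1)
    (univ ×ˢ Icc 0 1)
  deriv_eq : ∀ f : M → ℝ, ContMDiff I 𝓘(ℝ, ℝ) (⊤ : ℕ∞) f → ∀ x : M, ∀ s ∈ Icc (0:ℝ) 1,
    HasDerivWithinAt (fun t => f (toFun t x)) (P.bracket (F s) f (toFun s x)) (Icc 0 1) s

section Bundle

variable {EB : Type*} [NormedAddCommGroup EB] [NormedSpace ℝ EB] [FiniteDimensional ℝ EB]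
  {HB : Type*} [TopologicalSpace HB] {IB : ModelWithCorners ℝ EB HB}
  {S : Type*} [TopologicalSpace S] [ChartedSpace HB S] [IsManifold IB (⊤ : ℕ∞) S]
  {F : Type*} [NormedAddCommGroup F] [NormedSpace ℝ F] [FiniteDimensional ℝ F]
  {V : S → Type*} [∀ x, AddCommGroup (V x)] [∀ x, Module ℝ (V x)]
  [∀ x, TopologicalSpace (V x)] [TopologicalSpace (Bundle.TotalSpace F V)]
  [FiberBundle F V] [VectorBundle ℝ F V] [ContMDiffVectorBundle (⊤ : ℕ∞) F V IB]

variable (F) in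
/-- The graph of a section `μ` of the bundle, as a subset of the total space. -/
def secGraph (μ : ∀ x, V x) : Set (Bundle.TotalSpace F V) :=
  Set.range fun x => Bundle.TotalSpace.mk' F x (μ x)

variable (IB F) in
/-- A section of the bundle is smooth if the induced map into the total space is. -/
def IsSmoothSection (μ : ∀ x, V x) : Prop :=
  ContMDiff IB (IB.prod 𝓘(ℝ, F)) (⊤ : ℕ∞) fun x => Bundle.TotalSpace.mk' F x (μ x)

/-- A subset `C` of the total space of the Poisson manifold given by the bundle is
coisotropic if its vanishing ideal is closed under the Poisson bracket. -/
def IsCoisotropic (P : PoissonBracket (IB.prod 𝓘(ℝ, F)) (Bundle.TotalSpace F V))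
    (C : Set (Bundle.TotalSpace F V)) : Prop :=
  ∀ f g : Bundle.TotalSpace F V → ℝ,
    ContMDiff (IB.prod 𝓘(ℝ, F)) 𝓘(ℝ, ℝ) (⊤ : ℕ∞) f → ContMDiff (IB.prod 𝓘(ℝ, F)) 𝓘(ℝ, ℝ) (⊤ : ℕ∞) g →
    (∀ p ∈ C, f p = 0) → (∀ p ∈ C, g p = 0) → ∀ p ∈ C, P.bracket f g p = 0

/-- `(E, Π)` is a coisotropic vector bundle: the zero section is coisotropic. -/
def IsCoisotropicVectorBundle
    (P : PoissonBracket (IB.prod 𝓘(ℝ, F)) (Bundle.TotalSpace F V)) : Prop :=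
  IsCoisotropic P (secGraph F fun x => (0 : V x))

/-- A Hamiltonian homotopy from the section `μ0` to the section `μ1`: a smooth family of
sections `sec : S × [0,1] → E` from `μ0` to `μ1`, together with a smooth one-parameter
family of Hamiltonian diffeomorphisms of the total space moving the graph of `μ0` to the
graph of `sec t` for each `t ∈ [0,1]`. -/
structure HamiltonianHomotopy (P : PoissonBracket (IB.prod 𝓘(ℝ, F)) (Bundle.TotalSpace F V))
    (μ0 μ1 : ∀ x, V x) where
  sec : ℝ → ∀ x, V x
  smooth_sec : ContMDiffOn (IB.prod 𝓘(ℝ, ℝ)) (IB.prod 𝓘(ℝ, F)) (⊤ : ℕ∞)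
    (fun p : S × ℝ => Bundle.TotalSpace.mk' F p.1 (sec p.2 p.1)) (univ ×ˢ Icc 0 1)
  ham : HamiltonianFamily P
  sec_zero : sec 0 = μ0
  sec_one : sec 1 = μ1
  graph_eq : ∀ t ∈ Icc (0:ℝ) 1, ham.toFun t '' secGraph F μ0 = secGraph F (sec t)

end Bundle



section Helpers

noncomputable def myrho (t : ℝ) : ℝ := Real.smoothTransition (3*t - 1)

lemma myrho_contDiff : ContDiff ℝ (⊤:ℕ∞) myrho :=
  Real.smoothTransition.contDiff.comp ((contDiff_const.mul contDiff_id).sub contDiff_const)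

lemma myrho_mem (t : ℝ) : myrho t ∈ Icc (0:ℝ) 1 :=
  ⟨Real.smoothTransition.nonneg _, Real.smoothTransition.le_one _⟩

lemma myrho_eq_zero {t : ℝ} (h : t ≤ 1/3) : myrho t = 0 :=
  Real.smoothTransition.zero_of_nonpos (by linarith)

lemma myrho_eq_one {t : ℝ} (h : 2/3 ≤ t) : myrho t = 1 :=
  Real.smoothTransition.one_of_one_le (by linarith)

lemma myrho_deriv_zero_lt {t : ℝ} (h : t < 1/3) : deriv myrho t = 0 := by
  have he : myrho =ᶠ[nhds t] fun _ => (0:ℝ) :=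
    Filter.eventuallyEq_of_mem (Iio_mem_nhds h) (fun u hu => myrho_eq_zero (le_of_lt hu))
  rw [he.deriv_eq, deriv_const]

lemma myrho_deriv_zero_gt {t : ℝ} (h : 2/3 < t) : deriv myrho t = 0 := by
  have he : myrho =ᶠ[nhds t] fun _ => (1:ℝ) :=
    Filter.eventuallyEq_of_mem (Ioi_mem_nhds h) (fun u hu => myrho_eq_one (le_of_lt hu))
  rw [he.deriv_eq, deriv_const]

lemma myrho_deriv_contDiff : ContDiff ℝ (⊤:ℕ∞) (deriv myrho) :=
  (contDiff_infty_iff_deriv.mp myrho_contDiff).2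

lemma myrho_hasDerivAt (u : ℝ) : HasDerivAt myrho (deriv myrho u) u :=
  (myrho_contDiff.differentiable (by simp) u).hasDerivAt

variable {EM : Type*} [NormedAddCommGroup EM] [NormedSpace ℝ EM]
  {HM : Type*} [TopologicalSpace HM] {I : ModelWithCorners ℝ EM HM}
  {M : Type*} [TopologicalSpace M] [ChartedSpace HM M]

lemma bracket_zero (P : PoissonBracket I M) (f : M → ℝ) (hf : ContMDiff I 𝓘(ℝ, ℝ) (⊤ : ℕ∞) f) :
    P.bracket (fun _ => 0) f = fun _ => 0 := by
  have h0 : (fun _ : M => (0:ℝ)) = (0:ℝ) • (fun _ : M => (0:ℝ)) := by funext x; simp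
  rw [h0, P.smul_left 0 (fun _ => 0) f contMDiff_const hf]
  funext x; simp

lemma contMDiff_slice {EM' : Type*} [NormedAddCommGroup EM'] [NormedSpace ℝ EM']
    {HM' : Type*} [TopologicalSpace HM'] {I' : ModelWithCorners ℝ EM' HM'}
    {M' : Type*} [TopologicalSpace M'] [ChartedSpace HM' M']
    {g : M × ℝ → M'}
    (hg : ContMDiffOn (I.prod 𝓘(ℝ, ℝ)) I' (⊤ : ℕ∞) g (univ ×ˢ Icc 0 1))
    {t : ℝ} (ht : t ∈ Icc (0:ℝ) 1) : ContMDiff I I' (⊤ : ℕ∞) (fun x => g (x, t)) := by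
  rw [← contMDiffOn_univ]
  exact hg.comp ((contMDiff_id.prodMk contMDiff_const).contMDiffOn)
    (fun x _ => ⟨mem_univ _, ht⟩)

end Helpers

section Families

variable {EM : Type*} [NormedAddCommGroup EM] [NormedSpace ℝ EM]
  {HM : Type*} [TopologicalSpace HM] {I : ModelWithCorners ℝ EM HM}
  {M : Type*} [TopologicalSpace M] [ChartedSpace HM M]
  {P : PoissonBracket I M}

/-- The constant identity Hamiltonian family. -/
noncomputable def idFamily (P : PoissonBracket I M) : HamiltonianFamily P where
  toFun _ := id
  invFun _ := id
  smooth_toFun := contMDiff_fst.contMDiffOn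
  smooth_each _ _ := contMDiff_id
  smooth_inv _ _ := contMDiff_id
  left_inv _ _ := fun _ => rfl
  right_inv _ _ := fun _ => rfl
  init := rfl
  F _ _ := 0
  smooth_F := contMDiff_const.contMDiffOn
  deriv_eq f hf x s _hs := by
    have h0 : P.bracket (fun _ => 0) f (id x) = 0 := by
      rw [bracket_zero P f hf]
    rw [h0]
    exact hasDerivWithinAt_const _ _ _

lemma one_mem_Icc : (1:ℝ) ∈ Icc (0:ℝ) 1 := ⟨zero_le_one, le_rfl⟩

/-- The time-reversed Hamiltonian family. -/
noncomputable def symmFamily (hA : HamiltonianFamily P) : HamiltonianFamily P where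
  toFun t x := hA.toFun (1 - t) (hA.invFun 1 x)
  invFun t x := hA.toFun 1 (hA.invFun (1 - t) x)
  smooth_toFun := by
    have hq : ContMDiff (I.prod 𝓘(ℝ, ℝ)) (I.prod 𝓘(ℝ, ℝ)) (⊤ : ℕ∞)
        (fun p : M × ℝ => (hA.invFun 1 p.1, 1 - p.2)) :=
      ((hA.smooth_inv 1 one_mem_Icc).comp contMDiff_fst).prodMk
        (contMDiff_const.sub contMDiff_snd)
    exact hA.smooth_toFun.comp hq.contMDiffOn
      (fun p hp => ⟨mem_univ _, ⟨show (0:ℝ) ≤ 1 - p.2 by linarith [hp.2.2], show (1:ℝ) - p.2 ≤ 1 by linarith [hp.2.1]⟩⟩)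
  smooth_each t ht :=
    (hA.smooth_each (1 - t) ⟨by linarith [ht.2], by linarith [ht.1]⟩).comp
      (hA.smooth_inv 1 one_mem_Icc)
  smooth_inv t ht :=
    (hA.smooth_each 1 one_mem_Icc).comp
      (hA.smooth_inv (1 - t) ⟨by linarith [ht.2], by linarith [ht.1]⟩)
  left_inv t ht := by
    intro x
    have h1t : (1 - t) ∈ Icc (0:ℝ) 1 := ⟨by linarith [ht.2], by linarith [ht.1]⟩
    simp only
    rw [hA.left_inv (1 - t) h1t _, hA.right_inv 1 one_mem_Icc x]
  right_inv t ht := by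
    intro x
    have h1t : (1 - t) ∈ Icc (0:ℝ) 1 := ⟨by linarith [ht.2], by linarith [ht.1]⟩
    simp only
    rw [hA.left_inv 1 one_mem_Icc _, hA.right_inv (1 - t) h1t x]
  init := by
    funext x
    simp only [sub_zero]
    exact hA.right_inv 1 one_mem_Icc x
  F s x := - hA.F (1 - s) x
  smooth_F := by
    have hq : ContMDiff (I.prod 𝓘(ℝ, ℝ)) (I.prod 𝓘(ℝ, ℝ)) (⊤ : ℕ∞)
        (fun p : M × ℝ => (p.1, 1 - p.2)) :=
      contMDiff_fst.prodMk (contMDiff_const.sub contMDiff_snd)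
    exact (hA.smooth_F.comp hq.contMDiffOn
      (fun p hp => ⟨mem_univ _, ⟨show (0:ℝ) ≤ 1 - p.2 by linarith [hp.2.2], show (1:ℝ) - p.2 ≤ 1 by linarith [hp.2.1]⟩⟩)).neg
  deriv_eq f hf x s hs := by
    set y := hA.invFun 1 x with hy
    have h1s : (1 - s) ∈ Icc (0:ℝ) 1 := ⟨by linarith [hs.2], by linarith [hs.1]⟩
    have h1 := hA.deriv_eq f hf y (1 - s) h1s
    have h2 : HasDerivWithinAt (fun t : ℝ => 1 - t) (-1) (Icc 0 1) s :=
      ((hasDerivAt_id s).const_sub 1).hasDerivWithinAt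
    have h3 := HasDerivWithinAt.comp s h1 h2
      (fun t ht => ⟨by linarith [ht.2], by linarith [ht.1]⟩)
    have hFs : ContMDiff I 𝓘(ℝ, ℝ) (⊤ : ℕ∞) (hA.F (1 - s)) :=
      contMDiff_slice hA.smooth_F h1s
    have hsl := P.smul_left (-1) (hA.F (1 - s)) f hFs hf
    have hkey : P.bracket (fun z => - hA.F (1 - s) z) f (hA.toFun (1 - s) y)
        = P.bracket (hA.F (1 - s)) f (hA.toFun (1 - s) y) * (-1) := by
      have he : (fun z => - hA.F (1 - s) z) = (-1 : ℝ) • hA.F (1 - s) := by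
        funext z; simp
      rw [he, hsl]
      simp [mul_comm]
    rw [hkey]
    exact h3
end Families

section TransFam

variable {EM : Type*} [NormedAddCommGroup EM] [NormedSpace ℝ EM]
  {HM : Type*} [TopologicalSpace HM] {I : ModelWithCorners ℝ EM HM}
  {M : Type*} [TopologicalSpace M] [ChartedSpace HM M]
  {P : PoissonBracket I M}

variable (hA hB : HamiltonianFamily P)

noncomputable def transToFun (t : ℝ) (x : M) : M :=
  if t ≤ 1/2 then hA.toFun (myrho (2*t)) x else hB.toFun (myrho (2*t-1)) (hA.toFun 1 x)

noncomputable def transInvFun (t : ℝ) (x : M) : M :=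
  if t ≤ 1/2 then hA.invFun (myrho (2*t)) x else hA.invFun 1 (hB.invFun (myrho (2*t-1)) x)

noncomputable def transF (s : ℝ) (x : M) : ℝ :=
  if s ≤ 1/2 then (2 * deriv myrho (2*s)) * hA.F (myrho (2*s)) x
  else (2 * deriv myrho (2*s-1)) * hB.F (myrho (2*s-1)) x

lemma transToFun_const {t : ℝ} (h1 : 5/12 < t) (h2 : t < 13/24) (x : M) :
    transToFun hA hB t x = hA.toFun 1 x := by
  by_cases h : t ≤ 1/2
  · rw [transToFun, if_pos h, myrho_eq_one (by linarith)]
  · rw [transToFun, if_neg h, myrho_eq_zero (show 2*t-1 ≤ 1/3 by linarith), hB.init]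
    rfl

lemma transF_const {t : ℝ} (h1 : 5/12 < t) (h2 : t < 13/24) (x : M) :
    transF hA hB t x = 0 := by
  by_cases h : t ≤ 1/2
  · rw [transF, if_pos h, myrho_deriv_zero_gt (show 2/3 < 2*t by linarith)]
    ring
  · rw [transF, if_neg h, myrho_deriv_zero_lt (show 2*t-1 < 1/3 by linarith)]
    ring

lemma contMDiff_myrho2 : ContMDiff 𝓘(ℝ, ℝ) 𝓘(ℝ, ℝ) (⊤ : ℕ∞) (fun t : ℝ => myrho (2*t)) :=
  contMDiff_iff_contDiff.mpr (myrho_contDiff.comp ((contDiff_const.mul contDiff_id)))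

lemma contMDiff_myrho2' : ContMDiff 𝓘(ℝ, ℝ) 𝓘(ℝ, ℝ) (⊤ : ℕ∞) (fun t : ℝ => myrho (2*t-1)) :=
  contMDiff_iff_contDiff.mpr
    (myrho_contDiff.comp ((contDiff_const.mul contDiff_id).sub contDiff_const))

lemma contMDiff_drho2 : ContMDiff 𝓘(ℝ, ℝ) 𝓘(ℝ, ℝ) (⊤ : ℕ∞) (fun t : ℝ => 2 * deriv myrho (2*t)) :=
  contMDiff_iff_contDiff.mpr
    (contDiff_const.mul (myrho_deriv_contDiff.comp (contDiff_const.mul contDiff_id)))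

lemma contMDiff_drho2' :
    ContMDiff 𝓘(ℝ, ℝ) 𝓘(ℝ, ℝ) (⊤ : ℕ∞) (fun t : ℝ => 2 * deriv myrho (2*t-1)) :=
  contMDiff_iff_contDiff.mpr
    (contDiff_const.mul (myrho_deriv_contDiff.comp
      ((contDiff_const.mul contDiff_id).sub contDiff_const)))

lemma transToFun_smooth : ContMDiffOn (I.prod 𝓘(ℝ, ℝ)) I (⊤ : ℕ∞)
    (fun p : M × ℝ => transToFun hA hB p.2 p.1) (univ ×ˢ Icc 0 1) := by
  have hbr1 : ContMDiffOn (I.prod 𝓘(ℝ, ℝ)) I (⊤ : ℕ∞)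
      (fun p : M × ℝ => hA.toFun (myrho (2*p.2)) p.1) (univ ×ˢ Icc 0 1) := by
    have hq : ContMDiff (I.prod 𝓘(ℝ, ℝ)) (I.prod 𝓘(ℝ, ℝ)) (⊤ : ℕ∞)
        (fun p : M × ℝ => (p.1, myrho (2*p.2))) :=
      contMDiff_fst.prodMk (contMDiff_myrho2.comp contMDiff_snd)
    exact hA.smooth_toFun.comp hq.contMDiffOn (fun p _ => ⟨mem_univ _, myrho_mem _⟩)
  have hbr2 : ContMDiffOn (I.prod 𝓘(ℝ, ℝ)) I (⊤ : ℕ∞)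
      (fun p : M × ℝ => hB.toFun (myrho (2*p.2-1)) (hA.toFun 1 p.1)) (univ ×ˢ Icc 0 1) := by
    have hq : ContMDiff (I.prod 𝓘(ℝ, ℝ)) (I.prod 𝓘(ℝ, ℝ)) (⊤ : ℕ∞)
        (fun p : M × ℝ => (hA.toFun 1 p.1, myrho (2*p.2-1))) :=
      ((hA.smooth_each 1 one_mem_Icc).comp contMDiff_fst).prodMk
        (contMDiff_myrho2'.comp contMDiff_snd)
    exact hB.smooth_toFun.comp hq.contMDiffOn (fun p _ => ⟨mem_univ _, myrho_mem _⟩)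
  intro p hp
  rcases lt_trichotomy p.2 (1/2 : ℝ) with h | h | h
  · refine (hbr1 p hp).congr_of_eventuallyEq ?_ ?_
    · refine Filter.eventuallyEq_of_mem (mem_nhdsWithin_of_mem_nhds
        ((isOpen_lt continuous_snd continuous_const).mem_nhds h)) ?_
      intro q hq
      simp only [transToFun]
      exact if_pos (le_of_lt (show q.2 < 1/2 from hq))
    · simp only [transToFun, if_pos h.le]
  · have hc : ContMDiffWithinAt (I.prod 𝓘(ℝ, ℝ)) I (⊤ : ℕ∞)
        (fun q : M × ℝ => hA.toFun 1 q.1) (univ ×ˢ Icc 0 1) p :=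
      ((hA.smooth_each 1 one_mem_Icc).comp contMDiff_fst).contMDiffAt.contMDiffWithinAt
    refine hc.congr_of_eventuallyEq ?_ ?_
    · have hU : IsOpen {q : M × ℝ | 5/12 < q.2 ∧ q.2 < 13/24} :=
        (isOpen_lt continuous_const continuous_snd).inter
          (isOpen_lt continuous_snd continuous_const)
      have hpU : p ∈ {q : M × ℝ | 5/12 < q.2 ∧ q.2 < 13/24} := by
        constructor <;> (rw [h]; norm_num)
      refine Filter.eventuallyEq_of_mem (mem_nhdsWithin_of_mem_nhds (hU.mem_nhds hpU)) ?_
      intro q hq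
      exact transToFun_const hA hB hq.1 hq.2 q.1
    · exact transToFun_const hA hB (by rw [h]; norm_num) (by rw [h]; norm_num) p.1
  · refine (hbr2 p hp).congr_of_eventuallyEq ?_ ?_
    · refine Filter.eventuallyEq_of_mem (mem_nhdsWithin_of_mem_nhds
        ((isOpen_lt continuous_const continuous_snd).mem_nhds h)) ?_
      intro q hq
      simp only [transToFun]
      exact if_neg (not_le.mpr (show 1/2 < q.2 from hq))
    · simp only [transToFun, if_neg (not_le.mpr h)]

lemma transF_smooth : ContMDiffOn (I.prod 𝓘(ℝ, ℝ)) 𝓘(ℝ, ℝ) (⊤ : ℕ∞)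
    (fun p : M × ℝ => transF hA hB p.2 p.1) (univ ×ˢ Icc 0 1) := by
  have hbr1 : ContMDiffOn (I.prod 𝓘(ℝ, ℝ)) 𝓘(ℝ, ℝ) (⊤ : ℕ∞)
      (fun p : M × ℝ => (2 * deriv myrho (2*p.2)) * hA.F (myrho (2*p.2)) p.1)
      (univ ×ˢ Icc 0 1) := by
    have hq : ContMDiff (I.prod 𝓘(ℝ, ℝ)) (I.prod 𝓘(ℝ, ℝ)) (⊤ : ℕ∞)
        (fun p : M × ℝ => (p.1, myrho (2*p.2))) :=
      contMDiff_fst.prodMk (contMDiff_myrho2.comp contMDiff_snd)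
    exact ((contMDiff_drho2.comp contMDiff_snd).contMDiffOn).mul
      (hA.smooth_F.comp hq.contMDiffOn (fun p _ => ⟨mem_univ _, myrho_mem _⟩))
  have hbr2 : ContMDiffOn (I.prod 𝓘(ℝ, ℝ)) 𝓘(ℝ, ℝ) (⊤ : ℕ∞)
      (fun p : M × ℝ => (2 * deriv myrho (2*p.2-1)) * hB.F (myrho (2*p.2-1)) p.1)
      (univ ×ˢ Icc 0 1) := by
    have hq : ContMDiff (I.prod 𝓘(ℝ, ℝ)) (I.prod 𝓘(ℝ, ℝ)) (⊤ : ℕ∞)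
        (fun p : M × ℝ => (p.1, myrho (2*p.2-1))) :=
      contMDiff_fst.prodMk (contMDiff_myrho2'.comp contMDiff_snd)
    exact ((contMDiff_drho2'.comp contMDiff_snd).contMDiffOn).mul
      (hB.smooth_F.comp hq.contMDiffOn (fun p _ => ⟨mem_univ _, myrho_mem _⟩))
  intro p hp
  rcases lt_trichotomy p.2 (1/2 : ℝ) with h | h | h
  · refine (hbr1 p hp).congr_of_eventuallyEq ?_ ?_
    · refine Filter.eventuallyEq_of_mem (mem_nhdsWithin_of_mem_nhds
        ((isOpen_lt continuous_snd continuous_const).mem_nhds h)) ?_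
      intro q hq
      simp only [transF]
      exact if_pos (le_of_lt (show q.2 < 1/2 from hq))
    · simp only [transF, if_pos h.le]
  · refine (contMDiffWithinAt_const (c := (0:ℝ))).congr_of_eventuallyEq ?_ ?_
    · have hU : IsOpen {q : M × ℝ | 5/12 < q.2 ∧ q.2 < 13/24} :=
        (isOpen_lt continuous_const continuous_snd).inter
          (isOpen_lt continuous_snd continuous_const)
      have hpU : p ∈ {q : M × ℝ | 5/12 < q.2 ∧ q.2 < 13/24} := by
        constructor <;> (rw [h]; norm_num)
      refine Filter.eventuallyEq_of_mem (mem_nhdsWithin_of_mem_nhds (hU.mem_nhds hpU)) ?_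
      intro q hq
      exact transF_const hA hB hq.1 hq.2 q.1
    · exact transF_const hA hB (by rw [h]; norm_num) (by rw [h]; norm_num) p.1
  · refine (hbr2 p hp).congr_of_eventuallyEq ?_ ?_
    · refine Filter.eventuallyEq_of_mem (mem_nhdsWithin_of_mem_nhds
        ((isOpen_lt continuous_const continuous_snd).mem_nhds h)) ?_
      intro q hq
      simp only [transF]
      exact if_neg (not_le.mpr (show 1/2 < q.2 from hq))
    · simp only [transF, if_neg (not_le.mpr h)]

end TransFam

section TransFam2

variable {EM : Type*} [NormedAddCommGroup EM] [NormedSpace ℝ EM]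
  {HM : Type*} [TopologicalSpace HM] {I : ModelWithCorners ℝ EM HM}
  {M : Type*} [TopologicalSpace M] [ChartedSpace HM M]
  {P : PoissonBracket I M}

/-- The concatenated Hamiltonian family. -/
noncomputable def transFamily (hA hB : HamiltonianFamily P) : HamiltonianFamily P where
  toFun := transToFun hA hB
  invFun := transInvFun hA hB
  smooth_toFun := transToFun_smooth hA hB
  smooth_each t _ := by
    show ContMDiff I I (⊤ : ℕ∞) fun x => transToFun hA hB t x
    by_cases h : t ≤ (1/2 : ℝ)
    · simp only [transToFun, if_pos h]
      exact hA.smooth_each _ (myrho_mem _)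
    · simp only [transToFun, if_neg h]
      exact (hB.smooth_each _ (myrho_mem _)).comp (hA.smooth_each 1 one_mem_Icc)
  smooth_inv t _ := by
    show ContMDiff I I (⊤ : ℕ∞) fun x => transInvFun hA hB t x
    by_cases h : t ≤ (1/2 : ℝ)
    · simp only [transInvFun, if_pos h]
      exact hA.smooth_inv _ (myrho_mem _)
    · simp only [transInvFun, if_neg h]
      exact (hA.smooth_inv 1 one_mem_Icc).comp (hB.smooth_inv _ (myrho_mem _))
  left_inv t _ := by
    intro x
    by_cases h : t ≤ (1/2 : ℝ)
    · simp only [transToFun, transInvFun, if_pos h]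
      exact hA.left_inv _ (myrho_mem _) x
    · simp only [transToFun, transInvFun, if_neg h]
      rw [hB.left_inv _ (myrho_mem _) _]
      exact hA.left_inv 1 one_mem_Icc x
  right_inv t _ := by
    intro x
    by_cases h : t ≤ (1/2 : ℝ)
    · simp only [transToFun, transInvFun, if_pos h]
      exact hA.right_inv _ (myrho_mem _) x
    · simp only [transToFun, transInvFun, if_neg h]
      rw [hA.right_inv 1 one_mem_Icc _]
      exact hB.right_inv _ (myrho_mem _) x
  init := by
    funext x
    rw [transToFun, if_pos (by norm_num : (0:ℝ) ≤ 1/2),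
      show (2:ℝ) * 0 = 0 by ring, myrho_eq_zero (by norm_num), hA.init]
  F := transF hA hB
  smooth_F := transF_smooth hA hB
  deriv_eq f hf x s hs := by
    rcases lt_trichotomy s (1/2 : ℝ) with h | h | h
    · -- first half
      have h1 := hA.deriv_eq f hf x (myrho (2*s)) (myrho_mem _)
      have hin : HasDerivAt (fun t : ℝ => myrho (2*t)) (deriv myrho (2*s) * 2) s := by
        have h2t : HasDerivAt (fun t : ℝ => 2*t) 2 s := by
          simpa using (hasDerivAt_id s).const_mul 2
        exact (myrho_hasDerivAt (2*s)).comp s h2t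
      have h3 := HasDerivWithinAt.comp s h1 (hin.hasDerivWithinAt (s := Icc (0:ℝ) 1))
        (fun t _ => myrho_mem (2*t))
      have h4 : HasDerivWithinAt (fun t => f (transToFun hA hB t x))
          (P.bracket (hA.F (myrho (2*s))) f (hA.toFun (myrho (2*s)) x)
            * (deriv myrho (2*s) * 2)) (Icc 0 1) s := by
        refine h3.congr_of_eventuallyEq ?_ ?_
        · refine Filter.eventuallyEq_of_mem (mem_nhdsWithin_of_mem_nhds
            ((isOpen_Iio).mem_nhds h)) ?_
          intro t ht
          simp only [Function.comp, transToFun]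
          rw [if_pos (le_of_lt (show t < 1/2 from ht))]
        · simp only [Function.comp, transToFun]
          rw [if_pos h.le]
      have hFs : ContMDiff I 𝓘(ℝ, ℝ) (⊤ : ℕ∞) (hA.F (myrho (2*s))) :=
        contMDiff_slice hA.smooth_F (myrho_mem _)
      have hsl := P.smul_left (2 * deriv myrho (2*s)) (hA.F (myrho (2*s))) f hFs hf
      have hval : P.bracket (transF hA hB s) f (transToFun hA hB s x)
          = P.bracket (hA.F (myrho (2*s))) f (hA.toFun (myrho (2*s)) x)
            * (deriv myrho (2*s) * 2) := by
        have he : transF hA hB s = (2 * deriv myrho (2*s)) • hA.F (myrho (2*s)) := by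
          funext z
          rw [transF, if_pos h.le]
          rfl
        rw [he, hsl, show transToFun hA hB s x = hA.toFun (myrho (2*s)) x from
          if_pos h.le]
        simp only [Pi.smul_apply, smul_eq_mul]
        ring
      rw [hval]
      exact h4
    · -- midpoint
      subst h
      have hc : HasDerivWithinAt (fun t => f (transToFun hA hB t x)) 0 (Icc 0 1) (1/2) := by
        refine (hasDerivWithinAt_const _ _ (f (hA.toFun 1 x))).congr_of_eventuallyEq ?_ ?_
        · refine Filter.eventuallyEq_of_mem (mem_nhdsWithin_of_mem_nhds
            (Ioo_mem_nhds (by norm_num) (by norm_num) : Ioo (5/12 : ℝ) (13/24) ∈ nhds (1/2))) ?_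
          intro t ht
          show f (transToFun hA hB t x) = f (hA.toFun 1 x)
          rw [transToFun_const hA hB ht.1 ht.2 x]
        · rw [transToFun_const hA hB (by norm_num) (by norm_num) x]
      have hval : P.bracket (transF hA hB (1/2)) f (transToFun hA hB (1/2) x) = 0 := by
        have he : transF hA hB (1/2 : ℝ) = fun _ => (0:ℝ) := by
          funext z
          exact transF_const hA hB (by norm_num) (by norm_num) z
        rw [he, bracket_zero P f hf]
      rw [hval]
      exact hc
    · -- second half
      set y := hA.toFun 1 x with hy
      have h1 := hB.deriv_eq f hf y (myrho (2*s-1)) (myrho_mem _)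
      have hin : HasDerivAt (fun t : ℝ => myrho (2*t-1)) (deriv myrho (2*s-1) * 2) s := by
        have h2t : HasDerivAt (fun t : ℝ => 2*t-1) 2 s := by
          simpa using ((hasDerivAt_id s).const_mul 2).sub_const 1
        exact (myrho_hasDerivAt (2*s-1)).comp (h := fun t : ℝ => 2*t-1) s h2t
      have h3 := HasDerivWithinAt.comp s h1 (hin.hasDerivWithinAt (s := Icc (0:ℝ) 1))
        (fun t _ => myrho_mem (2*t-1))
      have h4 : HasDerivWithinAt (fun t => f (transToFun hA hB t x))
          (P.bracket (hB.F (myrho (2*s-1))) f (hB.toFun (myrho (2*s-1)) y)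
            * (deriv myrho (2*s-1) * 2)) (Icc 0 1) s := by
        refine h3.congr_of_eventuallyEq ?_ ?_
        · refine Filter.eventuallyEq_of_mem (mem_nhdsWithin_of_mem_nhds
            ((isOpen_Ioi).mem_nhds h)) ?_
          intro t ht
          simp only [Function.comp, transToFun]
          rw [if_neg (not_le.mpr (show 1/2 < t from ht))]
        · simp only [Function.comp, transToFun]
          rw [if_neg (not_le.mpr h)]
      have hFs : ContMDiff I 𝓘(ℝ, ℝ) (⊤ : ℕ∞) (hB.F (myrho (2*s-1))) :=
        contMDiff_slice hB.smooth_F (myrho_mem _)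
      have hsl := P.smul_left (2 * deriv myrho (2*s-1)) (hB.F (myrho (2*s-1))) f hFs hf
      have hval : P.bracket (transF hA hB s) f (transToFun hA hB s x)
          = P.bracket (hB.F (myrho (2*s-1))) f (hB.toFun (myrho (2*s-1)) y)
            * (deriv myrho (2*s-1) * 2) := by
        have he : transF hA hB s = (2 * deriv myrho (2*s-1)) • hB.F (myrho (2*s-1)) := by
          funext z
          rw [transF, if_neg (not_le.mpr h)]
          rfl
        rw [he, hsl, show transToFun hA hB s x = hB.toFun (myrho (2*s-1)) y from
          if_neg (not_le.mpr h)]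
        simp only [Pi.smul_apply, smul_eq_mul]
        ring
      rw [hval]
      exact h4

end TransFam2


section HomotopyConstructors

variable {EB : Type*} [NormedAddCommGroup EB] [NormedSpace ℝ EB] [FiniteDimensional ℝ EB]
  {HB : Type*} [TopologicalSpace HB] {IB : ModelWithCorners ℝ EB HB}
  {S : Type*} [TopologicalSpace S] [ChartedSpace HB S] [IsManifold IB (⊤ : ℕ∞) S]
  {F : Type*} [NormedAddCommGroup F] [NormedSpace ℝ F] [FiniteDimensional ℝ F]
  {V : S → Type*} [∀ x, AddCommGroup (V x)] [∀ x, Module ℝ (V x)]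
  [∀ x, TopologicalSpace (V x)] [TopologicalSpace (Bundle.TotalSpace F V)]
  [FiberBundle F V] [VectorBundle ℝ F V] [ContMDiffVectorBundle (⊤ : ℕ∞) F V IB]
  {P : PoissonBracket (IB.prod 𝓘(ℝ, F)) (Bundle.TotalSpace F V)}
  {μ0 μ1 μ2 : ∀ x, V x}

/-- The constant Hamiltonian homotopy from a smooth section to itself. -/
noncomputable def reflHomotopy (hμ : IsSmoothSection IB F μ0) :
    HamiltonianHomotopy P μ0 μ0 where
  sec _ := μ0
  smooth_sec := (hμ.comp contMDiff_fst).contMDiffOn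
  ham := idFamily P
  sec_zero := rfl
  sec_one := rfl
  graph_eq t _ := by simp [idFamily, image_id]

/-- The reversed Hamiltonian homotopy. -/
noncomputable def symmHomotopy (A : HamiltonianHomotopy P μ0 μ1) :
    HamiltonianHomotopy P μ1 μ0 where
  sec t := A.sec (1 - t)
  smooth_sec := by
    have hq : ContMDiff (IB.prod 𝓘(ℝ, ℝ)) (IB.prod 𝓘(ℝ, ℝ)) (⊤ : ℕ∞)
        (fun p : S × ℝ => (p.1, 1 - p.2)) :=
      contMDiff_fst.prodMk (contMDiff_const.sub contMDiff_snd)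
    exact A.smooth_sec.comp hq.contMDiffOn
      (fun p hp => ⟨mem_univ _, ⟨show (0:ℝ) ≤ 1 - p.2 by linarith [hp.2.2],
        show (1:ℝ) - p.2 ≤ 1 by linarith [hp.2.1]⟩⟩)
  ham := symmFamily A.ham
  sec_zero := by beta_reduce; rw [sub_zero, A.sec_one]
  sec_one := by beta_reduce; rw [sub_self, A.sec_zero]
  graph_eq t ht := by
    have h1t : (1 - t) ∈ Icc (0:ℝ) 1 := ⟨by linarith [ht.2], by linarith [ht.1]⟩
    have hinv : A.ham.invFun 1 '' secGraph F μ1 = secGraph F μ0 := by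
      have h1 : secGraph F μ1 = A.ham.toFun 1 '' secGraph F μ0 := by
        rw [A.graph_eq 1 one_mem_Icc, A.sec_one]
      rw [h1, (A.ham.left_inv 1 one_mem_Icc).image_image]
    show (fun x => A.ham.toFun (1 - t) (A.ham.invFun 1 x)) '' secGraph F μ1
      = secGraph F (A.sec (1 - t))
    rw [show (fun x => A.ham.toFun (1 - t) (A.ham.invFun 1 x))
        = A.ham.toFun (1 - t) ∘ A.ham.invFun 1 from rfl,
      Set.image_comp, hinv, A.graph_eq (1 - t) h1t]

/-- The concatenated Hamiltonian homotopy. -/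
noncomputable def transHomotopy (A : HamiltonianHomotopy P μ0 μ1)
    (B : HamiltonianHomotopy P μ1 μ2) : HamiltonianHomotopy P μ0 μ2 where
  sec t := if t ≤ 1/2 then A.sec (myrho (2*t)) else B.sec (myrho (2*t-1))
  smooth_sec := by
    have hμ1 : ContMDiff IB (IB.prod 𝓘(ℝ, F)) (⊤ : ℕ∞)
        (fun x => Bundle.TotalSpace.mk' F x (μ1 x)) := by
      have h := contMDiff_slice A.smooth_sec one_mem_Icc
      have h2 : (fun x => Bundle.TotalSpace.mk' F x (A.sec 1 x))
          = fun x => Bundle.TotalSpace.mk' F x (μ1 x) := by rw [A.sec_one]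
      rw [← h2]
      exact h
    have hbr1 : ContMDiffOn (IB.prod 𝓘(ℝ, ℝ)) (IB.prod 𝓘(ℝ, F)) (⊤ : ℕ∞)
        (fun p : S × ℝ => Bundle.TotalSpace.mk' F p.1 (A.sec (myrho (2*p.2)) p.1))
        (univ ×ˢ Icc 0 1) := by
      have hq : ContMDiff (IB.prod 𝓘(ℝ, ℝ)) (IB.prod 𝓘(ℝ, ℝ)) (⊤ : ℕ∞)
          (fun p : S × ℝ => (p.1, myrho (2*p.2))) :=
        contMDiff_fst.prodMk (contMDiff_myrho2.comp contMDiff_snd)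
      exact A.smooth_sec.comp hq.contMDiffOn (fun p _ => ⟨mem_univ _, myrho_mem _⟩)
    have hbr2 : ContMDiffOn (IB.prod 𝓘(ℝ, ℝ)) (IB.prod 𝓘(ℝ, F)) (⊤ : ℕ∞)
        (fun p : S × ℝ => Bundle.TotalSpace.mk' F p.1 (B.sec (myrho (2*p.2-1)) p.1))
        (univ ×ˢ Icc 0 1) := by
      have hq : ContMDiff (IB.prod 𝓘(ℝ, ℝ)) (IB.prod 𝓘(ℝ, ℝ)) (⊤ : ℕ∞)
          (fun p : S × ℝ => (p.1, myrho (2*p.2-1))) :=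
        contMDiff_fst.prodMk (contMDiff_myrho2'.comp contMDiff_snd)
      exact B.smooth_sec.comp hq.contMDiffOn (fun p _ => ⟨mem_univ _, myrho_mem _⟩)
    have hconst : ∀ t : ℝ, 5/12 < t → t < 13/24 → ∀ x : S,
        (if t ≤ 1/2 then A.sec (myrho (2*t)) else B.sec (myrho (2*t-1))) x = μ1 x := by
      intro t h1 h2 x
      by_cases h : t ≤ 1/2
      · rw [if_pos h, myrho_eq_one (by linarith : 2/3 ≤ 2*t), A.sec_one]
      · rw [if_neg h, myrho_eq_zero (show 2*t-1 ≤ 1/3 by linarith), B.sec_zero]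
    intro p hp
    rcases lt_trichotomy p.2 (1/2 : ℝ) with h | h | h
    · refine (hbr1 p hp).congr_of_eventuallyEq ?_ ?_
      · refine Filter.eventuallyEq_of_mem (mem_nhdsWithin_of_mem_nhds
          ((isOpen_lt continuous_snd continuous_const).mem_nhds h)) ?_
        intro q hq
        beta_reduce
        rw [if_pos (le_of_lt (show q.2 < 1/2 from hq))]
      · beta_reduce
        rw [if_pos h.le]
    · have hc : ContMDiffWithinAt (IB.prod 𝓘(ℝ, ℝ)) (IB.prod 𝓘(ℝ, F)) (⊤ : ℕ∞)
          (fun q : S × ℝ => Bundle.TotalSpace.mk' F q.1 (μ1 q.1)) (univ ×ˢ Icc 0 1) p :=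
        (hμ1.comp contMDiff_fst).contMDiffAt.contMDiffWithinAt
      refine hc.congr_of_eventuallyEq ?_ ?_
      · have hU : IsOpen {q : S × ℝ | 5/12 < q.2 ∧ q.2 < 13/24} :=
          (isOpen_lt continuous_const continuous_snd).inter
            (isOpen_lt continuous_snd continuous_const)
        have hpU : p ∈ {q : S × ℝ | 5/12 < q.2 ∧ q.2 < 13/24} := by
          constructor <;> (rw [h]; norm_num)
        refine Filter.eventuallyEq_of_mem (mem_nhdsWithin_of_mem_nhds (hU.mem_nhds hpU)) ?_
        intro q hq
        beta_reduce
        rw [hconst q.2 hq.1 hq.2 q.1]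
      · beta_reduce
        rw [hconst p.2 (by rw [h]; norm_num) (by rw [h]; norm_num) p.1]
    · refine (hbr2 p hp).congr_of_eventuallyEq ?_ ?_
      · refine Filter.eventuallyEq_of_mem (mem_nhdsWithin_of_mem_nhds
          ((isOpen_lt continuous_const continuous_snd).mem_nhds h)) ?_
        intro q hq
        beta_reduce
        rw [if_neg (not_le.mpr (show 1/2 < q.2 from hq))]
      · beta_reduce
        rw [if_neg (not_le.mpr h)]
  ham := transFamily A.ham B.ham
  sec_zero := by
    beta_reduce
    rw [if_pos (by norm_num : (0:ℝ) ≤ 1/2), show (2:ℝ) * 0 = 0 by ring,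
      myrho_eq_zero (by norm_num), A.sec_zero]
  sec_one := by
    beta_reduce
    rw [if_neg (by norm_num : ¬ (1:ℝ) ≤ 1/2), show (2:ℝ) * 1 - 1 = 1 by ring,
      myrho_eq_one (by norm_num), B.sec_one]
  graph_eq t ht := by
    by_cases h : t ≤ (1/2 : ℝ)
    · show transToFun A.ham B.ham t '' secGraph F μ0 = _
      beta_reduce
      rw [show transToFun A.ham B.ham t = A.ham.toFun (myrho (2*t)) from
        funext fun x => if_pos h, A.graph_eq _ (myrho_mem _), if_pos h]
    · show transToFun A.ham B.ham t '' secGraph F μ0 = _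
      beta_reduce
      rw [show transToFun A.ham B.ham t
          = B.ham.toFun (myrho (2*t-1)) ∘ A.ham.toFun 1 from funext fun x => if_neg h,
        Set.image_comp]
      have h1 : A.ham.toFun 1 '' secGraph F μ0 = secGraph F μ1 := by
        rw [A.graph_eq 1 one_mem_Icc, A.sec_one]
      rw [h1, B.graph_eq _ (myrho_mem _), if_neg h]

end HomotopyConstructors

/-- For a coisotropic vector bundle `(E, Π)`, the relation "there exists a Hamiltonian
homotopy from `μ` to `ν`" on the set of (smooth) coisotropic sections is an equivalence
relation. -/
theorem statement_5 {EB : Type*} [NormedAddCommGroup EB] [NormedSpace ℝ EB]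
    [FiniteDimensional ℝ EB]
    {HB : Type*} [TopologicalSpace HB] {IB : ModelWithCorners ℝ EB HB}
    {S : Type*} [TopologicalSpace S] [ChartedSpace HB S] [IsManifold IB (⊤ : ℕ∞) S]
    {F : Type*} [NormedAddCommGroup F] [NormedSpace ℝ F] [FiniteDimensional ℝ F]
    {V : S → Type*} [∀ x, AddCommGroup (V x)] [∀ x, Module ℝ (V x)]
    [∀ x, TopologicalSpace (V x)] [TopologicalSpace (Bundle.TotalSpace F V)]
    [FiberBundle F V] [VectorBundle ℝ F V] [ContMDiffVectorBundle (⊤ : ℕ∞) F V IB]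
    (P : PoissonBracket (IB.prod 𝓘(ℝ, F)) (Bundle.TotalSpace F V))
    (hP : IsCoisotropicVectorBundle P) :
    Equivalence (fun μ ν :
        {μ : ∀ x, V x // IsSmoothSection IB F μ ∧ IsCoisotropic P (secGraph F μ)} =>
      Nonempty (HamiltonianHomotopy P μ.1 ν.1)) := by
  constructor
  · intro μ
    exact ⟨reflHomotopy μ.2.1⟩
  · rintro μ ν ⟨h⟩
    exact ⟨symmHomotopy h⟩
  · rintro μ ν κ ⟨h1⟩ ⟨h2⟩
    exact ⟨transHomotopy h1 h2⟩
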